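/- Let K be a field, s ≥ 1 an integer, and V = K^s with standard basis (e_1, …, e_s). For a subset I ⊆ {1,…,s}, let V_I be the span of {e_j : j ∈ I}. Fix an integer i with 1 ≤ i ≤ s, and suppose that for every subset I ⊆ {1,…,s} with |I| > s − i we are given a nonzero subspace H_I ⊆ V_I. Then the subspace of V spanned by the union of all the H_I has dimension at least i. -/
import Mathlib

lemma stmt_18_aux {K : Type*} [Field K] {n : ℕ} :
    ∀ d : ℕ, ∀ W : Submodule K (Fin n → K), Module.finrank K W ≤ d →
    ∃ C : Finset (Fin n), C.card ≤ d ∧ ∀ w ∈ W, (∀ j ∈ C, w j = 0) → w = 0 := by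
  intro d
  induction d with
  | zero =>
    intro W hW
    refine ⟨∅, le_refl _, ?_⟩
    have hb : W = ⊥ := Submodule.finrank_eq_zero.mp (Nat.le_zero.mp hW)
    intro w hw _
    simpa [hb] using hw
  | succ d ih =>
    intro W hW
    by_cases hb : W = ⊥
    · exact ⟨∅, Nat.zero_le _, fun w hw _ => by simpa [hb] using hw⟩
    · obtain ⟨w0, hw0, hw0ne⟩ := (Submodule.ne_bot_iff W).mp hb
      obtain ⟨j, hj⟩ : ∃ j, w0 j ≠ 0 := by
        by_contra h; push_neg at h; exact hw0ne (funext h)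
      set W' := W ⊓ LinearMap.ker (LinearMap.proj (R := K) (φ := fun _ : Fin n => K) j)
        with hW'
      have hlt : W' < W := by
        refine lt_of_le_of_ne inf_le_left fun h => hj ?_
        have : w0 ∈ W' := h ▸ hw0
        simpa using this.2
      have hrank : Module.finrank K W' < Module.finrank K W :=
        Submodule.finrank_lt_finrank_of_lt hlt
      obtain ⟨C', hC'c, hC'⟩ := ih W' (by omega)
      refine ⟨insert j C', (Finset.card_insert_le _ _).trans (by omega), ?_⟩
      intro w hw hv
      refine hC' w ⟨hw, ?_⟩ fun c hc => hv c (Finset.mem_insert_of_mem hc)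
      simpa using hv j (Finset.mem_insert_self _ _)

theorem stmt_18 {K : Type*} [Field K] (s : ℕ) (hs : 1 ≤ s) (i : ℕ)
    (hi1 : 1 ≤ i) (his : i ≤ s)
    (H : Finset (Fin s) → Submodule K (Fin s → K))
    (hne : ∀ I : Finset (Fin s), s - i < I.card → H I ≠ ⊥)
    (hsub : ∀ I : Finset (Fin s), s - i < I.card →
      H I ≤ Submodule.span K ((fun j => Pi.single j (1 : K)) '' ↑I)) :
    i ≤ Module.finrank K
      ↥(⨆ (I : Finset (Fin s)) (_ : s - i < I.card), H I) := by
  by_contra hcon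
  push_neg at hcon
  set W := ⨆ (I : Finset (Fin s)) (_ : s - i < I.card), H I with hWdef
  obtain ⟨C, hCcard, hC⟩ := stmt_18_aux (K := K) (n := s) (i - 1) W (by omega)
  set I := Cᶜ with hI
  have hIcard : I.card = s - C.card := by
    simp [hI, Finset.card_compl]
  have hCle : C.card ≤ s := by
    simpa using Finset.card_le_card (Finset.subset_univ C)
  have hgt : s - i < I.card := by
    rw [hIcard]; omega
  obtain ⟨x, hxH, hxne⟩ := (Submodule.ne_bot_iff (H I)).mp (hne I hgt)
  have hxW : x ∈ W := by
    have hle : H I ≤ W := le_iSup₂ (f := fun J (_ : s - i < J.card) => H J) I hgt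
    exact hle hxH
  have hxz : ∀ c ∈ C, x c = 0 := by
    intro c hc
    have key : ∀ v ∈ Submodule.span K ((fun j => Pi.single j (1 : K)) '' ↑I), v c = 0 := by
      intro v hv
      induction hv using Submodule.span_induction with
      | mem v hv =>
        obtain ⟨j, hjI, rfl⟩ := hv
        have hne' : c ≠ j := by
          intro h; subst h
          exact (Finset.mem_compl.mp hjI) hc
        simp [Pi.single_eq_of_ne hne']
      | zero => simp
      | add v w _ _ hv hw => simp [hv, hw]
      | smul a v _ hv => simp [hv]
    exact key x (hsub I hgt hxH)
  exact hxne (hC x hxW hxz)
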